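/- Let κ be a strongly inaccessible cardinal. If the polarized relation (κ⁺, κ) → (2, κ)_χ holds for every cardinal χ < κ, then for every ordinal γ < κ and every cardinal χ < κ the relation (κ⁺, κ) → (γ, κ)_χ holds. Equivalently (contrapositive): if (κ⁺, κ) ↛ (γ, κ)_χ for some γ < κ and χ < κ, then (κ⁺, κ) ↛ (2, κ)_{χ'} for some cardinal χ' < κ (indeed χ' can be taken of size |χ × χ|). -/

import Mathlib

open Cardinal Set Ordinal

noncomputable section

/-- `A` is a set of ordinals of order type `γ`: it is the range of a strictly
monotone enumeration indexed by the ordinals below `γ`. -/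
def HasOtp (A : Set Ordinal) (γ : Ordinal) : Prop :=
  ∃ e : Set.Iio γ → Ordinal, StrictMono e ∧ Set.range e = A

/-- The polarized partition relation `(λ, κ) → (γ, δ)_χ`: every coloring of
`λ × κ` with `χ` colors is constant on a product `A × B` with `otp A = γ`,
`otp B = δ`. -/
def PolRel (lam kap γ δ : Ordinal) (χ : Cardinal) : Prop :=
  ∀ c : Ordinal → Ordinal → Ordinal,
    (∀ α < lam, ∀ β < kap, c α β < χ.ord) →
    ∃ A B : Set Ordinal, A ⊆ Set.Iio lam ∧ B ⊆ Set.Iio kap ∧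
      HasOtp A γ ∧ HasOtp B δ ∧ ∃ i, ∀ α ∈ A, ∀ β ∈ B, c α β = i


universe u v

private lemma aux_isRegular_lift {c : Cardinal.{u}} (h : c.IsRegular) :
    (Cardinal.lift.{v} c).IsRegular := by
  constructor
  · rw [← lift_aleph0.{v, u}]
    exact lift_le.2 h.1
  · rw [← lift_ord, ← lift_cof]
    exact lift_le.2 h.2

private lemma aux_big_fiber {α β : Type u} (f : α → β) {c : Cardinal.{u}} (hreg : c.IsRegular)
    (hα : c ≤ #α) (hβ : #β < c) : ∃ b, c ≤ #{a // f a = b} := by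
  by_contra hcon
  push_neg at hcon
  have h1 : #α = Cardinal.sum fun b => #{a // f a = b} := by
    rw [← mk_sigma]
    exact (mk_congr (Equiv.sigmaFiberEquiv f)).symm
  have h2 : Cardinal.sum (fun b => #{a // f a = b}) < c :=
    Cardinal.sum_lt_of_isRegular hreg hβ hcon
  exact (hα.trans_lt (h1 ▸ h2)).false

private lemma aux_mono {X : Set Ordinal.{u}} {γ : Ordinal.{u}}
    (h : Cardinal.lift.{u + 1} γ.card < #X) :
    ∃ e : Set.Iio γ → Ordinal, StrictMono e ∧ Set.range e ⊆ X := by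
  have hγo : Ordinal.lift.{u + 1} γ < Ordinal.type ((· < ·) : X → X → Prop) := by
    refine lt_of_not_ge fun hle => ?_
    have h2 := Ordinal.card_le_card hle
    rw [Ordinal.card_type, ← Ordinal.lift_card] at h2
    exact h.not_ge h2
  refine ⟨fun ξ => (Ordinal.enum ((· < ·) : X → X → Prop)
      ⟨Ordinal.lift.{u + 1} ξ.1, lt_trans (Ordinal.lift_lt.2 ξ.2) hγo⟩ : X).1, ?_, ?_⟩
  · intro ξ ξ' hlt
    have := (Ordinal.enum_lt_enum (r := ((· < ·) : X → X → Prop))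
      (o₁ := ⟨Ordinal.lift.{u + 1} ξ.1, lt_trans (Ordinal.lift_lt.2 ξ.2) hγo⟩)
      (o₂ := ⟨Ordinal.lift.{u + 1} ξ'.1, lt_trans (Ordinal.lift_lt.2 ξ'.2) hγo⟩)).2
      (Subtype.mk_lt_mk.2 (Ordinal.lift_lt.2 hlt))
    exact this
  · rintro _ ⟨ξ, rfl⟩
    exact (Ordinal.enum ((· < ·) : X → X → Prop) _).2

theorem stmt6 (κ : Cardinal) (hinacc : κ.IsInaccessible)
    (h2 : ∀ χ : Cardinal, χ < κ → PolRel (Order.succ κ).ord κ.ord 2 κ.ord χ) :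
    ∀ γ < κ.ord, ∀ χ : Cardinal, χ < κ → PolRel (Order.succ κ).ord κ.ord γ κ.ord χ := by
  obtain ⟨hℵ, hreg, hsl⟩ := hinacc
  intro γ hγ χ hχ c hc
  have hκ0 : (0 : Ordinal) < κ.ord := by
    rw [Cardinal.lt_ord]
    simp only [Ordinal.card_zero]
    exact aleph0_pos.trans hℵ
  have hκ1 : (0 : Ordinal) < (Order.succ κ).ord := by
    rw [Cardinal.lt_ord]
    simp only [Ordinal.card_zero]
    exact aleph0_pos.trans (hℵ.trans (Order.lt_succ κ))
  rcases eq_or_ne χ 0 with rfl | hχ0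
  · exact absurd (hc 0 hκ1 0 hκ0) (by simp)
  have hχordpos : (0 : Ordinal) < χ.ord := by
    rw [Cardinal.lt_ord]
    simpa using zero_lt_iff.mpr hχ0
  set ν := max (max γ.card χ) ℵ₀ with hν
  set L := Order.succ ν with hLdef
  have hνℵ : ℵ₀ ≤ ν := le_max_right _ _
  have hLreg : L.IsRegular := isRegular_succ hνℵ
  have hγν : γ.card ≤ ν := le_trans (le_max_left _ _) (le_max_left _ _)
  have hχν : χ ≤ ν := le_trans (le_max_right _ _) (le_max_left _ _)
  have hνκ : ν < κ := max_lt (max_lt (Cardinal.lt_ord.1 hγ) hχ) hℵ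
  have hLκ : L < κ := lt_of_le_of_lt (Order.succ_le_of_lt (Cardinal.cantor ν)) (hsl hνκ)
  have hχL : χ < L := lt_of_le_of_lt hχν (Order.lt_succ ν)
  have hγL : γ < L.ord := Cardinal.lt_ord.2 (lt_of_le_of_lt hγν (Order.lt_succ ν))
  set μ := χ ^ L with hμdef
  have hμκ : μ < κ := by
    have c1 : χ ^ L ≤ (2 ^ L) ^ L := power_le_power_right (hχL.le.trans (Cardinal.cantor L).le)
    have c2 : (2 ^ L : Cardinal) ^ L = 2 ^ (L * L) := (power_mul).symm
    have c3 : L * L = L := mul_eq_self hLreg.1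
    calc μ ≤ (2 ^ L) ^ L := c1
      _ = 2 ^ L := by rw [c2, c3]
      _ < κ := hsl hLκ
  -- the coding equivalence
  have hTcard : #(Set.Iio L.ord → Set.Iio χ.ord) = #(Set.Iio μ.ord) := by
    rw [← Cardinal.power_def, Cardinal.mk_Iio_ordinal, Cardinal.mk_Iio_ordinal, Cardinal.mk_Iio_ordinal,
      card_ord, card_ord, card_ord, ← lift_power, hμdef]
  obtain ⟨enc⟩ := Cardinal.eq.1 hTcard
  set F : Ordinal → Ordinal → (Set.Iio L.ord → Set.Iio χ.ord) := fun α β ν' =>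
    if h : c (L.ord * α + ν'.1) β < χ.ord then ⟨_, h⟩ else ⟨0, hχordpos⟩ with hF
  set d : Ordinal → Ordinal → Ordinal := fun α β => (enc (F α β)).1 with hd
  have hdlt : ∀ α < (Order.succ κ).ord, ∀ β < κ.ord, d α β < μ.ord :=
    fun α _ β _ => (enc (F α β)).2
  obtain ⟨A₂, B, hA₂, hB, hA₂otp, hBotp, i, hi⟩ := h2 μ hμκ d hdlt
  obtain ⟨eA, heAmono, heA⟩ := hA₂otp
  set α₀ := eA ⟨0, by norm_num⟩ with hα₀def
  have hα₀A : α₀ ∈ A₂ := heA ▸ mem_range_self _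
  have hα₀ : α₀ < (Order.succ κ).ord := hA₂ hα₀A
  obtain ⟨eB, heBmono, heB⟩ := hBotp
  set β₀ := eB ⟨0, hκ0⟩ with hβ₀def
  have hβ₀B : β₀ ∈ B := heB ▸ mem_range_self _
  -- block elements are below (succ κ).ord
  have hblock : ∀ ν'' < L.ord, L.ord * α₀ + ν'' < (Order.succ κ).ord := by
    intro ν'' hν''
    rw [Cardinal.lt_ord, Ordinal.card_add, Ordinal.card_mul, card_ord, Order.lt_succ_iff]
    have e1 : L ≤ κ := hLκ.le
    have e2 : α₀.card ≤ κ := Order.lt_succ_iff.1 (Cardinal.lt_ord.1 hα₀)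
    have e3 : ν''.card ≤ κ := ((Cardinal.lt_ord.1 hν'').trans hLκ).le
    calc L * α₀.card + ν''.card ≤ κ * κ + κ := by
          exact add_le_add (mul_le_mul' e1 e2) e3
      _ = κ + κ := by rw [mul_eq_self hℵ.le]
      _ = κ := add_eq_self hℵ.le
  -- all rows in the block agree across B with the pattern g
  set g : Set.Iio L.ord → Set.Iio χ.ord := F α₀ β₀ with hg
  have hrow : ∀ β ∈ B, F α₀ β = g := by
    intro β hβ'
    refine enc.injective (Subtype.ext ?_)
    exact (hi α₀ hα₀A β hβ').trans (hi α₀ hα₀A β₀ hβ₀B).symm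
  have hval : ∀ β ∈ B, ∀ ν' : Set.Iio L.ord, c (L.ord * α₀ + ν'.1) β = (g ν').1 := by
    intro β hβ' ν'
    have hlt : c (L.ord * α₀ + ν'.1) β < χ.ord := hc _ (hblock ν'.1 ν'.2) β (hB hβ')
    rw [← hrow β hβ', hF]
    simp only [hlt, dif_pos]
  -- pigeonhole: some fiber of g is big
  have hregL' : (#(Set.Iio L.ord)).IsRegular := by
    rw [Cardinal.mk_Iio_ordinal, card_ord]
    exact aux_isRegular_lift hLreg
  have hχsmall : #(Set.Iio χ.ord) < #(Set.Iio L.ord) := by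
    rw [Cardinal.mk_Iio_ordinal, Cardinal.mk_Iio_ordinal, card_ord, card_ord]
    exact lift_lt.2 hχL
  obtain ⟨w, hw⟩ := aux_big_fiber g hregL' le_rfl hχsmall
  -- the fiber as a set of ordinals
  set X : Set Ordinal := Subtype.val '' {ν' : Set.Iio L.ord | g ν' = w} with hX
  have hXsub : ∀ x ∈ X, x < L.ord := by
    rintro _ ⟨ν', _, rfl⟩
    exact ν'.2
  have hXval : ∀ x ∈ X, ∀ hx : x < L.ord, (g ⟨x, hx⟩).1 = w.1 := by
    rintro _ ⟨ν', hν', rfl⟩ hx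
    have : (⟨ν'.1, hx⟩ : Set.Iio L.ord) = ν' := Subtype.ext rfl
    rw [this, hν']
  obtain ⟨eS, heSmono, heSX⟩ := aux_mono (X := X) (γ := γ) (by
    rw [hX, Cardinal.mk_image_eq Subtype.val_injective]
    refine lt_of_lt_of_le ?_ hw
    rw [Cardinal.mk_Iio_ordinal, card_ord]
    exact lift_lt.2 (lt_of_le_of_lt hγν (Order.lt_succ ν)))
  refine ⟨Set.range (fun ξ : Set.Iio γ => L.ord * α₀ + eS ξ), B, ?_, hB,
    ⟨_, ?_, rfl⟩, ⟨eB, heBmono, heB⟩, w.1, ?_⟩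
  · rintro _ ⟨ξ, rfl⟩
    exact hblock _ (hXsub _ (heSX (mem_range_self ξ)))
  · intro ξ ξ' hlt
    exact (add_lt_add_iff_left _).2 (heSmono hlt)
  · rintro _ ⟨ξ, rfl⟩ β hβ'
    have hmem := heSX (mem_range_self ξ)
    have hlt := hXsub _ hmem
    have := hval β hβ' ⟨eS ξ, hlt⟩
    rw [this, hXval _ hmem hlt]

end
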